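/- In the setting of the previous example ($u_1' = -u_3$, $u_2' = -u_2/u_1$, $u_3' = -u_3$, $u_1(0)>0$, $u_3(0) = Au_1(0)$ with $A>1$): if $(A-1)u_1(0) > 1$ and $u_2(0) \neq 0$, then the derivative $u_2'(t)$ blows up as $t \to t^{*-}$, where $t^* = \ln(A/(A-1))$ is the time at which $u_1$ attains $0$; i.e., $|u_2'(t)| \to +\infty$ as $t \to t^{*-}$. -/

import Mathlib

open Real Filter

/-- Auxiliary: a function with zero derivative on `Ico 0 T` is constant there. -/
lemma aux_const_on {f : ℝ → ℝ} {T : ℝ}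
    (hT : ∀ x ∈ Set.Ico (0:ℝ) T, HasDerivAt f 0 x) :
    ∀ t ∈ Set.Ico (0:ℝ) T, f t = f 0 := by
  intro t ht
  have hsub : Set.Icc (0:ℝ) t ⊆ Set.Ico (0:ℝ) T := fun x hx =>
    ⟨hx.1, lt_of_le_of_lt hx.2 ht.2⟩
  have hcont : ContinuousOn f (Set.Icc 0 t) := fun x hx =>
    ((hT x (hsub hx)).continuousAt).continuousWithinAt
  exact constant_of_has_deriv_right_zero hcont
    (fun x hx => ((hT x (hsub (Set.Ico_subset_Icc_self hx))).hasDerivWithinAt))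
    t (Set.right_mem_Icc.mpr ht.1)

/-- in the setting of Example (2.19), if `(A-1)u₁(0) > 1` and
`u₂(0) ≠ 0`, then the derivative of `u₂` blows up as `t → t*⁻`, where
`t* = ln(A/(A-1))` is the time at which `u₁` reaches `0`. -/
theorem example_slow_blow_up
    (u₁ u₂ u₃ : ℝ → ℝ) (A : ℝ) (hA : 1 < A)
    (h10 : 0 < u₁ 0) (h30 : u₃ 0 = A * u₁ 0)
    (h20 : u₂ 0 ≠ 0) (hexp : 1 < (A - 1) * u₁ 0)
    (tstar : ℝ) (htstar : tstar = Real.log (A / (A - 1)))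
    (hpos : ∀ t ∈ Set.Ico (0:ℝ) tstar, 0 < u₁ t)
    (hode₁ : ∀ t ∈ Set.Ico (0:ℝ) tstar, HasDerivAt u₁ (-(u₃ t)) t)
    (hode₂ : ∀ t ∈ Set.Ico (0:ℝ) tstar, HasDerivAt u₂ (-(u₂ t) / u₁ t) t)
    (hode₃ : ∀ t ∈ Set.Ico (0:ℝ) tstar, HasDerivAt u₃ (-(u₃ t)) t) :
    Tendsto (fun t => |deriv u₂ t|) (nhdsWithin tstar (Set.Iio tstar)) atTop := by
  set c : ℝ := (A - 1) * u₁ 0 with hc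
  have hc1 : 1 < c := hexp
  have hc0 : (0:ℝ) < c := lt_trans one_pos hc1
  have hA1 : (0:ℝ) < A - 1 := by linarith
  have htpos : 0 < tstar := by
    rw [htstar]
    apply Real.log_pos
    rw [lt_div_iff₀ hA1]; linarith
  -- Step 1: u₃ t = u₃ 0 * exp (-t) on Ico 0 tstar
  have h3 : ∀ t ∈ Set.Ico (0:ℝ) tstar, u₃ t = u₃ 0 * Real.exp (-t) := by
    have key : ∀ t ∈ Set.Ico (0:ℝ) tstar, u₃ t * Real.exp t = u₃ 0 * Real.exp 0 := by
      apply aux_const_on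
      intro x hx
      have := (hode₃ x hx).mul (Real.hasDerivAt_exp x)
      refine this.congr_deriv ?_; ring
    intro t ht
    have h := key t ht
    have : u₃ t * Real.exp t = u₃ 0 := by simpa using h
    rw [← this, Real.exp_neg]
    field_simp
  -- Step 2: u₁ t = u₃ 0 * exp (-t) - c on Ico 0 tstar
  have h1 : ∀ t ∈ Set.Ico (0:ℝ) tstar, u₁ t = u₃ 0 * Real.exp (-t) - c := by
    have key : ∀ t ∈ Set.Ico (0:ℝ) tstar,
        u₁ t - u₃ 0 * Real.exp (-t) = u₁ 0 - u₃ 0 * Real.exp (-(0:ℝ)) := by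
      apply aux_const_on (f := fun t => u₁ t - u₃ 0 * Real.exp (-t))
      intro x hx
      have hexp' : HasDerivAt (fun t : ℝ => u₃ 0 * Real.exp (-t))
          (u₃ 0 * (Real.exp (-x) * (-1))) x := by
        exact (((Real.hasDerivAt_exp (-x)).comp x ((hasDerivAt_id x).neg))).const_mul (u₃ 0)
      have := (hode₁ x hx).sub hexp'
      refine this.congr_deriv ?_
      rw [h3 x hx]; ring
    intro t ht
    have h := key t ht
    have h0 : u₁ 0 - u₃ 0 * Real.exp (-(0:ℝ)) = -c := by
      simp [hc, h30]; ring
    rw [h0] at h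
    linarith
  -- Step 3: u₂ t * exp (-(log (u₁ t) + t)/c) constant
  have h2 : ∀ t ∈ Set.Ico (0:ℝ) tstar,
      u₂ t = u₂ 0 * Real.exp ((Real.log (u₁ t) + t - Real.log (u₁ 0)) / c) := by
    have key : ∀ t ∈ Set.Ico (0:ℝ) tstar,
        u₂ t * Real.exp (-(Real.log (u₁ t) + t)/c)
          = u₂ 0 * Real.exp (-(Real.log (u₁ 0) + 0)/c) := by
      apply aux_const_on (f := fun t => u₂ t * Real.exp (-(Real.log (u₁ t) + t)/c))
      intro x hx
      have hx0 : u₁ x ≠ 0 := ne_of_gt (hpos x hx)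
      have hinner : HasDerivAt (fun t => -(Real.log (u₁ t) + t)/c)
          (-((-(u₃ x)) / u₁ x + 1)/c) x := by
        exact ((((hode₁ x hx).log hx0).add (hasDerivAt_id x)).neg).div_const c
      have hE := hinner.exp
      have := (hode₂ x hx).mul hE
      refine this.congr_deriv ?_
      have h3x : u₃ x = u₁ x + c := by
        rw [h3 x hx, h1 x hx]; ring
      rw [h3x]
      field_simp
      ring
    intro t ht
    have h := key t ht
    have hne : Real.exp (-(Real.log (u₁ t) + t)/c) ≠ 0 := Real.exp_ne_zero _
    have h' : u₂ t = u₂ 0 * Real.exp (-(Real.log (u₁ 0) + 0)/c)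
        / Real.exp (-(Real.log (u₁ t) + t)/c) := by
      rw [eq_div_iff hne]; exact h
    rw [h', mul_div_assoc, ← Real.exp_sub]
    congr 1
    field_simp
    ring
  -- The explicit blow-up function
  have hcne : c ≠ 0 := ne_of_gt hc0
  -- u₁ tends to 0 from the right as t → tstar⁻
  have hexp_tstar : u₃ 0 * Real.exp (-tstar) = c := by
    rw [htstar, Real.exp_neg, Real.exp_log (by positivity : (0:ℝ) < A / (A - 1)), h30, hc]
    field_simp
  have hevIoo : ∀ᶠ t in nhdsWithin tstar (Set.Iio tstar), t ∈ Set.Ioo 0 tstar := by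
    have h1' : ∀ᶠ t in nhdsWithin tstar (Set.Iio tstar), t ∈ Set.Ioi (0:ℝ) :=
      eventually_mem_set.mpr (mem_nhdsWithin_of_mem_nhds (Ioi_mem_nhds htpos))
    have h2' : ∀ᶠ t in nhdsWithin tstar (Set.Iio tstar), t ∈ Set.Iio tstar :=
      eventually_mem_nhdsWithin
    filter_upwards [h1', h2'] with t ha hb
    exact ⟨ha, hb⟩
  have hu1tendsto : Tendsto u₁ (nhdsWithin tstar (Set.Iio tstar)) (nhdsWithin 0 (Set.Ioi 0)) := by
    rw [tendsto_nhdsWithin_iff]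
    constructor
    · have hw : Tendsto (fun t => u₃ 0 * Real.exp (-t) - c)
          (nhdsWithin tstar (Set.Iio tstar)) (nhds 0) := by
        have : ContinuousAt (fun t => u₃ 0 * Real.exp (-t) - c) tstar := by
          fun_prop
        have := this.tendsto
        rw [show u₃ 0 * Real.exp (-tstar) - c = 0 by rw [hexp_tstar]; ring] at this
        exact this.mono_left nhdsWithin_le_nhds
      refine hw.congr' ?_
      filter_upwards [hevIoo] with t ht
      exact (h1 t ⟨le_of_lt ht.1, ht.2⟩).symm
    · filter_upwards [hevIoo] with t ht
      exact hpos t ⟨le_of_lt ht.1, ht.2⟩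
  have hLtendsto : Tendsto (fun t => Real.log (u₁ t))
      (nhdsWithin tstar (Set.Iio tstar)) atBot :=
    Real.tendsto_log_nhdsGT_zero.comp hu1tendsto
  -- main exponent tends to atTop
  have hcoef : 1/c - 1 < 0 := by
    rw [sub_neg, div_lt_one hc0]; exact hc1
  have hmain : Tendsto (fun t => (1/c - 1) * Real.log (u₁ t) + (0 - Real.log (u₁ 0))/c)
      (nhdsWithin tstar (Set.Iio tstar)) atTop :=
    tendsto_atTop_add_const_right _ _ (hLtendsto.const_mul_atBot_of_neg hcoef)
  have hexp_top : Tendsto (fun t => |u₂ 0| *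
      Real.exp ((1/c - 1) * Real.log (u₁ t) + (t - Real.log (u₁ 0))/c))
      (nhdsWithin tstar (Set.Iio tstar)) atTop := by
    apply Tendsto.const_mul_atTop (abs_pos.mpr h20)
    apply tendsto_atTop_mono' _ _ (Real.tendsto_exp_atTop.comp hmain)
    filter_upwards [hevIoo] with t ht
    simp only [Function.comp_apply]
    apply Real.exp_le_exp.mpr
    have h0t : (0:ℝ) ≤ t := ht.1.le
    gcongr
  -- Conclude by eventual equality
  refine hexp_top.congr' ?_
  filter_upwards [hevIoo] with t ht
  have htIco : t ∈ Set.Ico (0:ℝ) tstar := ⟨ht.1.le, ht.2⟩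
  have hu1pos : 0 < u₁ t := hpos t htIco
  have hderiv : deriv u₂ t = -(u₂ t) / u₁ t := (hode₂ t htIco).deriv
  have habs : |deriv u₂ t| = |u₂ t| / u₁ t := by
    rw [hderiv, abs_div, abs_neg, abs_of_pos hu1pos]
  have hu2 : |u₂ t| = |u₂ 0| * Real.exp ((Real.log (u₁ t) + t - Real.log (u₁ 0)) / c) := by
    rw [h2 t htIco, abs_mul, abs_of_pos (Real.exp_pos _)]
  have hu1inv : (u₁ t)⁻¹ = Real.exp (-Real.log (u₁ t)) := by
    rw [Real.exp_neg, Real.exp_log hu1pos]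
  rw [eq_comm, habs, div_eq_mul_inv, hu2, hu1inv, mul_assoc, ← Real.exp_add]
  congr 1
  field_simp
  ring
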